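/- If A is a family of infinite subsets of ℕ and there exists g : ℕ → ℕ such that next(a,·) <* g for every a ∈ A, then A can be reaped, i.e., there is c ⊆ ℕ such that both a ∩ c and a \ c are infinite for every a ∈ A. -/
import Mathlib


open Set Filter Cardinal

/-- `a ⊆* b` : `a` is almost contained in `b` (mod finite). -/
def almostLE (a b : Set ℕ) : Prop := (a \ b).Finite

/-- `f <* g` : eventual domination mod finite. -/
def domLT (f g : ℕ → ℕ) : Prop := {k | g k ≤ f k}.Finite

/-- The bounding number 𝔟. -/
noncomputable def bNum : Cardinal :=
  sInf { c | ∃ F : Set (ℕ → ℕ), Cardinal.mk F = c ∧ ∀ g : ℕ → ℕ, ∃ f ∈ F, ¬ domLT f g }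

/-- The dominating number 𝔡. -/
noncomputable def dNum : Cardinal :=
  sInf { c | ∃ F : Set (ℕ → ℕ), Cardinal.mk F = c ∧ ∀ g : ℕ → ℕ, ∃ f ∈ F, domLT g f }

/-- `c` reaps the family `A`. -/
def Reaps (c : Set ℕ) (A : Set (Set ℕ)) : Prop :=
  ∀ a ∈ A, (a ∩ c).Infinite ∧ (a \ c).Infinite

/-- The reaping number 𝔯. -/
noncomputable def rNum : Cardinal :=
  sInf { c | ∃ A : Set (Set ℕ), Cardinal.mk A = c ∧ (∀ a ∈ A, a.Infinite) ∧
    ∀ d : Set ℕ, ¬ Reaps d A }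

/-- The splitting number 𝔰. -/
noncomputable def sNum : Cardinal :=
  sInf { c | ∃ A : Set (Set ℕ), Cardinal.mk A = c ∧ ∀ b : Set ℕ, b.Infinite →
    ∃ a ∈ A, (b ∩ a).Infinite ∧ (b \ a).Infinite }

/-- `next(a,k)`, the least element of `a` above `k`. -/
noncomputable def nxt (a : Set ℕ) (k : ℕ) : ℕ := sInf {n | n ∈ a ∧ k < n}

/-- ℕ*, the Stone–Čech remainder, realized as the space of free ultrafilters on ℕ. -/
abbrev NStar : Type := {x : Ultrafilter ℕ // (Filter.cofinite : Filter ℕ) ≤ ↑x}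

/-- For `a ⊆ ℕ`, the basic clopen set `a*` of free ultrafilters containing `a`. -/
def setStar (a : Set ℕ) : Set NStar := {x | a ∈ x.1}

/-- The ideal `I_A = { a ⊆ ℕ : a* ⊆ A }`. -/
def idealOf (A : Set NStar) : Set (Set ℕ) := {a | setStar a ⊆ A}

/-- `A` is almost clopen: the closure of an open set with a unique boundary point. -/
def AlmostClopen (A : Set NStar) : Prop :=
  (∃ U : Set NStar, IsOpen U ∧ A = closure U) ∧ ∃! x : NStar, x ∈ frontier A

/-- `x` is a tie-point as witnessed by the closed sets `A`, `B`. -/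
def TiePoint {X : Type*} [TopologicalSpace X] (x : X) (A B : Set X) : Prop :=
  IsClosed A ∧ IsClosed B ∧ A ∪ B = Set.univ ∧ A ∩ B = {x} ∧
    x ∈ closure (A \ {x}) ∧ x ∈ closure (B \ {x})

/-- An almost clopen set `A` is simple of type `κ`: `I_A` has a strictly ⊆*-increasing,
⊆*-cofinal chain of order type `κ`. -/
def SimpleType (A : Set NStar) (κ : Cardinal) : Prop :=
  ∃ a : Ordinal → Set ℕ,
    (∀ α, α < κ.ord → a α ∈ idealOf A) ∧
    (∀ α β, α < β → β < κ.ord → almostLE (a α) (a β) ∧ (a β \ a α).Infinite) ∧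
    (∀ c ∈ idealOf A, ∃ α, α < κ.ord ∧ almostLE c (a α))

/-- The family `A` converges to the ultrafilter `x`. -/
def Converges (A : Set (Set ℕ)) (x : Ultrafilter ℕ) : Prop :=
  ∀ U ∈ x, Cardinal.mk {a : Set ℕ // a ∈ A ∧ (a \ U).Infinite} < Cardinal.mk A

/-- `A` is hereditarily unreapable. -/
def HeredUnreapable (A : Set (Set ℕ)) : Prop :=
  ∀ B ⊆ A, (∃ c : Set ℕ, Reaps c B) → Cardinal.mk B < Cardinal.mk A

/-- `f <_x g` for an ultrafilter `x`. -/
def ultLT (x : Ultrafilter ℕ) (f g : ℕ → ℕ) : Prop := {n | f n < g n} ∈ x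

/-- A fixed `<*`-increasing `<*`-unbounded family `{f_ξ : ξ < 𝔟}` of strictly increasing
functions. -/
def UnbddChain (f : Ordinal → ℕ → ℕ) : Prop :=
  (∀ ξ, ξ < bNum.ord → StrictMono (f ξ)) ∧
  (∀ η ξ, η < ξ → ξ < bNum.ord → domLT (f η) (f ξ)) ∧
  (∀ g : ℕ → ℕ, ∃ ξ, ξ < bNum.ord ∧ ¬ domLT (f ξ) g)

/-- `x` is an almost `P_λ`-point. -/
def AlmostPPoint (x : Ultrafilter ℕ) (lam : Cardinal) : Prop :=
  ∀ F : Set (Set ℕ), (∀ U ∈ F, U ∈ x) → Cardinal.mk F < lam →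
    ∃ p : Set ℕ, p.Infinite ∧ ∀ U ∈ F, almostLE p U

theorem stmt3 (A : Set (Set ℕ)) (hA : ∀ a ∈ A, a.Infinite) (g : ℕ → ℕ)
    (hg : ∀ a ∈ A, domLT (nxt a) g) :
    ∃ c : Set ℕ, Reaps c A := by
  classical
  have hnxt : ∀ a : Set ℕ, a.Infinite → ∀ k, nxt a k ∈ a ∧ k < nxt a k := by
    intro a ha k
    have hne : {n | n ∈ a ∧ k < n}.Nonempty := by
      obtain ⟨n, hn, hk⟩ := ha.exists_gt k
      exact ⟨n, hn, hk⟩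
    exact Nat.sInf_mem hne
  set N : ℕ → ℕ := fun i => Nat.rec 0 (fun _ p => (Finset.range (p+1)).sup g + p + 1) i
    with hNdef
  have hNsucc : ∀ i, N (i+1) = (Finset.range (N i + 1)).sup g + N i + 1 := fun i => rfl
  have hNmono : StrictMono N := by
    apply strictMono_nat_of_lt_succ
    intro i; rw [hNsucc]; omega
  have hNge : ∀ i, i ≤ N i := fun i => hNmono.le_apply
  have hNg : ∀ i k, k ≤ N i → g k < N (i+1) := by
    intro i k hk
    have : g k ≤ (Finset.range (N i + 1)).sup g :=
      Finset.le_sup (Finset.mem_range.mpr (by omega))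
    rw [hNsucc]; omega
  refine ⟨{m | ∃ i, N (2*i) ≤ m ∧ m < N (2*i+1)}, ?_⟩
  intro a ha
  have hainf := hA a ha
  obtain ⟨B, hB⟩ : ∃ B, ∀ k, B ≤ k → nxt a k < g k := by
    obtain ⟨B, hB⟩ := (hg a ha).bddAbove
    refine ⟨B + 1, fun k hk => ?_⟩
    by_contra hcon
    have : k ∈ {k | g k ≤ nxt a k} := by simpa using Nat.le_of_not_lt hcon
    have := hB this
    omega
  have key : ∀ i, B ≤ N i → nxt a (N i) ∈ a ∧ N i < nxt a (N i) ∧ nxt a (N i) < N (i+1) := by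
    intro i hi
    obtain ⟨hmem, hlt⟩ := hnxt a hainf (N i)
    refine ⟨hmem, hlt, lt_trans (hB _ hi) (hNg i (N i) le_rfl)⟩
  constructor
  · -- a ∩ c infinite
    apply Set.infinite_of_not_bddAbove
    rintro ⟨b, hb⟩
    set i := 2 * (B + b + 1) with hi
    have hiB : B ≤ N i := le_trans (by omega) (hNge i)
    obtain ⟨hmem, hlt, hlt'⟩ := key i hiB
    have hmc : nxt a (N i) ∈ a ∩ {m | ∃ j, N (2*j) ≤ m ∧ m < N (2*j+1)} :=
      ⟨hmem, ⟨B + b + 1, le_of_lt hlt, hlt'⟩⟩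
    have := hb hmc
    have hbN : b < N i := lt_of_lt_of_le (by omega) (hNge i)
    omega
  · -- a \ c infinite
    apply Set.infinite_of_not_bddAbove
    rintro ⟨b, hb⟩
    set i := 2 * (B + b + 1) + 1 with hi
    have hiB : B ≤ N i := le_trans (by omega) (hNge i)
    obtain ⟨hmem, hlt, hlt'⟩ := key i hiB
    have hnot : nxt a (N i) ∉ {m | ∃ j, N (2*j) ≤ m ∧ m < N (2*j+1)} := by
      rintro ⟨j, hj1, hj2⟩
      rcases lt_or_ge (2*j+1) (i+1) with h | h
      · have h2 : N (2*j+1) ≤ N i := hNmono.monotone (show 2*j+1 ≤ i by omega)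
        omega
      · have h2 : N (i+1) ≤ N (2*j) := hNmono.monotone (show i+1 ≤ 2*j by omega)
        omega
    have hmc : nxt a (N i) ∈ a \ {m | ∃ j, N (2*j) ≤ m ∧ m < N (2*j+1)} := ⟨hmem, hnot⟩
    have := hb hmc
    have hbN : b < N i := lt_of_lt_of_le (by omega) (hNge i)
    omega
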